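/- Let a < b be real numbers, N ≥ 1 a natural number, and let R_1, …, R_N be independent random variables each uniformly distributed on [a, b]. Then for every δ ∈ (0, 1), with probability at least 1 − δ², |max_{1 ≤ n ≤ N} R_n − (a + N·b)/(N + 1)| ≤ (b − a)/(N·δ). -/

import Mathlib

open MeasureTheory ProbabilityTheory

private lemma sq_le_exp_half_add {u : ℝ} (hu : 1 ≤ u) : u ^ 2 ≤ Real.exp (1/2 + u) := by
  have h := Real.sum_le_exp_of_nonneg (by linarith : (0:ℝ) ≤ 1/2 + u) 4
  simp [Finset.sum_range_succ, Nat.factorial] at h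
  nlinarith [sq_nonneg u, sq_nonneg (u - 1)]

theorem concentration_max_iid_uniform
    {Ω : Type*} [MeasurableSpace Ω] (P : Measure Ω) [IsProbabilityMeasure P]
    (a b : ℝ) (hab : a < b) (N : ℕ) (hN : 1 ≤ N)
    (R : Fin N → Ω → ℝ) (hmeas : ∀ n, Measurable (R n))
    (hunif : ∀ n, Measure.map (R n) P
      = (ENNReal.ofReal (b - a))⁻¹ • volume.restrict (Set.Icc a b))
    (hindep : iIndepFun R P)
    (δ : ℝ) (hδ : δ ∈ Set.Ioo (0 : ℝ) 1) :
    1 - δ ^ 2 ≤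
      (P {ω | |(⨆ n, R n ω) - (a + N * b) / (N + 1)| ≤ (b - a) / (N * δ)}).toReal := by
  obtain ⟨hδ0, hδ1⟩ := hδ
  haveI : Nonempty (Fin N) := ⟨⟨0, hN⟩⟩
  have hN' : (1:ℝ) ≤ (N:ℝ) := by exact_mod_cast hN
  have hN0 : (0:ℝ) < N := by linarith
  have hN1 : (0:ℝ) < (N:ℝ) + 1 := by linarith
  set μ₀ : ℝ := (a + N * b) / (N + 1) with hμ₀
  set t : ℝ := (b - a) / (N * δ) with htdef
  set c : ℝ := μ₀ - t with hcdef
  have hba : (0:ℝ) < b - a := by linarith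
  have ht0 : 0 < t := div_pos hba (by positivity)
  have hμb : μ₀ < b := by
    rw [hμ₀, div_lt_iff₀ hN1]; nlinarith
  have hμa : μ₀ - a = N * (b - a) / (N + 1) := by
    rw [hμ₀]; field_simp; ring
  have hcb : c < b := by rw [hcdef]; linarith
  have hbμt : b ≤ μ₀ + t := by
    have h1 : (b - a) / (N + 1) < t := by
      rw [htdef]
      apply div_lt_div_of_pos_left hba (by positivity)
      nlinarith
    have : b - μ₀ = (b - a) / (N + 1) := by rw [hμ₀]; field_simp; ring
    linarith
  -- the events
  set E : Set Ω := {ω | |(⨆ n, R n ω) - μ₀| ≤ t} with hE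
  set B1 : Set Ω := ⋃ n, R n ⁻¹' (Set.Icc a b)ᶜ with hB1
  set B2 : Set Ω := ⋂ n, R n ⁻¹' (Set.Iio c) with hB2
  -- covering
  have hcover : (Set.univ : Set Ω) ⊆ E ∪ (B1 ∪ B2) := by
    intro ω _
    by_cases hin : ∀ n, R n ω ∈ Set.Icc a b
    · have hbdd : BddAbove (Set.range fun n => R n ω) := Set.Finite.bddAbove (Set.finite_range _)
      have hsupb : (⨆ n, R n ω) ≤ b := ciSup_le fun n => (hin n).2
      by_cases hlow : c ≤ ⨆ n, R n ω
      · left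
        rw [hE, Set.mem_setOf_eq, abs_le]
        constructor
        · rw [hcdef] at hlow; linarith
        · linarith
      · right; right
        rw [hB2, Set.mem_iInter]
        intro n
        have := le_ciSup hbdd n
        exact lt_of_le_of_lt this (lt_of_not_ge hlow)
    · right; left
      push_neg at hin
      obtain ⟨n, hn⟩ := hin
      exact Set.mem_iUnion.2 ⟨n, hn⟩
  -- B1 has measure zero
  have hPB1 : P B1 = 0 := by
    rw [hB1, measure_iUnion_null_iff]
    intro n
    have : P (R n ⁻¹' (Set.Icc a b)ᶜ) = Measure.map (R n) P (Set.Icc a b)ᶜ := by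
      rw [Measure.map_apply (hmeas n) (measurableSet_Icc.compl)]
    rw [this, hunif n, Measure.smul_apply, Measure.restrict_apply measurableSet_Icc.compl]
    simp
  -- each factor
  have hfac : ∀ n, P (R n ⁻¹' Set.Iio c)
      = (ENNReal.ofReal (b - a))⁻¹ * ENNReal.ofReal (c - a) := by
    intro n
    have : P (R n ⁻¹' Set.Iio c) = Measure.map (R n) P (Set.Iio c) := by
      rw [Measure.map_apply (hmeas n) measurableSet_Iio]
    rw [this, hunif n, Measure.smul_apply, Measure.restrict_apply measurableSet_Iio]
    have hset : Set.Iio c ∩ Set.Icc a b = Set.Ico a c := by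
      ext x
      simp only [Set.mem_inter_iff, Set.mem_Iio, Set.mem_Icc, Set.mem_Ico]
      constructor
      · rintro ⟨h1, h2, _⟩; exact ⟨h2, h1⟩
      · rintro ⟨h1, h2⟩; exact ⟨h2, h1, by linarith⟩
    rw [hset, Real.volume_Ico, smul_eq_mul]
  -- bound on B2
  have hPB2 : P B2 ≤ ENNReal.ofReal (δ ^ 2) := by
    have hmeasB2 : ∀ n, MeasurableSet[MeasurableSpace.comap (R n) inferInstance]
        (R n ⁻¹' Set.Iio c) := fun n => ⟨Set.Iio c, measurableSet_Iio, rfl⟩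
    have hprod : P B2 = ∏ n : Fin N, P (R n ⁻¹' Set.Iio c) :=
      hindep.meas_iInter hmeasB2
    rw [hprod]
    have hconst : ∏ n : Fin N, P (R n ⁻¹' Set.Iio c)
        = ((ENNReal.ofReal (b - a))⁻¹ * ENNReal.ofReal (c - a)) ^ N := by
      rw [Finset.prod_congr rfl (fun n _ => hfac n), Finset.prod_const, Finset.card_univ,
        Fintype.card_fin]
    rw [hconst]
    by_cases hca : c ≤ a
    · have : ENNReal.ofReal (c - a) = 0 := by
        rw [ENNReal.ofReal_eq_zero]; linarith
      rw [this, mul_zero, zero_pow (by omega)]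
      exact zero_le
    · push_neg at hca
      set x : ℝ := (c - a) / (b - a) with hx
      have hx0 : 0 ≤ x := div_nonneg (by linarith) hba.le
      have hfaceq : (ENNReal.ofReal (b - a))⁻¹ * ENNReal.ofReal (c - a)
          = ENNReal.ofReal x := by
        rw [hx, ENNReal.ofReal_div_of_pos hba, div_eq_mul_inv, mul_comm]
      rw [hfaceq, ← ENNReal.ofReal_pow hx0]
      apply ENNReal.ofReal_le_ofReal
      -- key real inequality : x ^ N ≤ δ ^ 2
      have hxval : x = (μ₀ - a) / (b - a) - t / (b - a) := by
        rw [hx, hcdef]; ring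
      have hs : 1 - x = 1 / (N + 1) + 1 / (N * δ) := by
        rw [hxval, hμa, htdef]
        field_simp
        ring
      have hexp1 : x ≤ Real.exp (-(1 - x)) := by
        have := Real.add_one_le_exp (-(1 - x))
        linarith
      have h1 : x ^ N ≤ Real.exp (-(1 - x)) ^ N := pow_le_pow_left₀ hx0 hexp1 N
      rw [← Real.exp_nat_mul] at h1
      have h2 : Real.exp ((N : ℝ) * -(1 - x)) ≤ Real.exp (-(1/2 + 1/δ)) := by
        apply Real.exp_le_exp.2
        rw [hs]
        have hNfrac : (1:ℝ)/2 ≤ (N:ℝ) * (1 / (N + 1)) := by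
          rw [mul_one_div, le_div_iff₀ hN1]; linarith
        have h1δ : (N:ℝ) * (1 / (N * δ)) = 1/δ := by
          field_simp
        calc (N:ℝ) * -(1 / (N + 1) + 1 / (N * δ))
            = -((N:ℝ) * (1 / (N + 1)) + (N:ℝ) * (1 / (N * δ))) := by ring
          _ ≤ -(1/2 + 1/δ) := by rw [h1δ]; linarith
      have hu : 1 ≤ 1/δ := (le_div_iff₀ hδ0).2 (by linarith)
      have h3 : Real.exp (-(1/2 + 1/δ)) ≤ δ ^ 2 := by
        have h4 := sq_le_exp_half_add hu
        have h5 : (1/δ) ^ 2 = (δ ^ 2)⁻¹ := by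
          field_simp
        rw [Real.exp_neg]
        rw [h5] at h4
        have h6 : 0 < Real.exp (1/2 + 1/δ) := Real.exp_pos _
        rw [inv_le_iff_one_le_mul₀ h6]
        calc (1:ℝ) = (δ ^ 2)⁻¹ * δ ^ 2 := by field_simp
          _ ≤ Real.exp (1/2 + 1/δ) * δ ^ 2 := by
              apply mul_le_mul_of_nonneg_right h4 (by positivity)
          _ = δ ^ 2 * Real.exp (1/2 + 1/δ) := by ring
      linarith
  -- combine
  have hunion : (1 : ENNReal) ≤ P E + ENNReal.ofReal (δ ^ 2) := by
    calc (1 : ENNReal) = P Set.univ := (measure_univ).symm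
      _ ≤ P (E ∪ (B1 ∪ B2)) := measure_mono hcover
      _ ≤ P E + P (B1 ∪ B2) := measure_union_le _ _
      _ ≤ P E + (P B1 + P B2) := by gcongr; exact measure_union_le _ _
      _ = P E + P B2 := by rw [hPB1, zero_add]
      _ ≤ P E + ENNReal.ofReal (δ ^ 2) := by gcongr
  have hPE : ENNReal.ofReal (1 - δ ^ 2) ≤ P E := by
    have : ENNReal.ofReal (1 - δ ^ 2) = 1 - ENNReal.ofReal (δ ^ 2) := by
      rw [ENNReal.ofReal_sub _ (by positivity), ENNReal.ofReal_one]
    rw [this]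
    exact tsub_le_iff_right.2 hunion
  have hfin : P E ≠ ⊤ := measure_ne_top P E
  have := (ENNReal.ofReal_le_iff_le_toReal hfin).1 hPE
  exact this
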